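/- If A = (A, B, β, T) is a finite relative Rota-Baxter group, then the exponent of the Schur multiplier M_{RRB}(A) = H²_{RRB}(A, C) divides |A|·|B|, where C = (ℂ^×, ℂ^×, trivial action, identity map). -/
import Mathlib

namespace SchurRRBAux

variable {G : Type*} [CommGroup G]

lemma rearr1 {x y z w : G} (h : x * y⁻¹ * z * w⁻¹ = 1) :
    x * z = y * w := by
  rw [mul_inv_eq_one] at h
  rw [mul_comm x y⁻¹, mul_assoc] at h
  rwa [inv_mul_eq_iff_eq_mul] at h

lemma rearr2 {p q r s t : G} (h : p * q⁻¹ * r⁻¹ * s * t⁻¹ = 1) :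
    p * s = q * (r * t) := by
  rw [mul_inv_eq_one] at h
  have h2 : (q * r)⁻¹ * (p * s) = t := by
    rw [← h]
    simp [mul_inv, mul_comm, mul_left_comm, mul_assoc]
  rw [inv_mul_eq_iff_eq_mul] at h2
  rw [h2, mul_assoc]

lemma rearr3 {x y z c : G} (h : x * z = y * c) : x * y⁻¹ * z = c := by
  rw [mul_comm x y⁻¹, mul_assoc, h, inv_mul_cancel_left]

lemma powCob {x y z c : G} (k : ℕ) (h : x * y⁻¹ * z = c) :
    x ^ k * (y ^ k)⁻¹ * z ^ k = c ^ k := by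
  rw [← inv_pow, ← mul_pow, ← mul_pow, h]

end SchurRRBAux

/-- For a finite relative Rota-Baxter group `𝒜 = (A, B, β, T)`, the
exponent of the Schur multiplier `M_{RRB}(𝒜) = H²_{RRB}(𝒜, 𝒞)` divides `|A|·|B|`:
for every 2-cocycle `(τ₁, τ₂, ρ, χ)` with values in `𝒞 = (ℂˣ, ℂˣ, trivial, id)`,
its `|A||B|`-th power is a 2-coboundary. -/
theorem schurMultiplier_exponent_dvd {A B : Type*} [Group A] [Group B] [Fintype A] [Fintype B]
    (β : B →* MulAut A) (T : A → B)
    (hT : ∀ a₁ a₂ : A, T a₁ * T a₂ = T (a₁ * β (T a₁) a₂))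
    (τ₁ : A → A → ℂˣ) (τ₂ : B → B → ℂˣ) (ρ : A → B → ℂˣ) (χ : A → ℂˣ)
    (hτ₁norm : ∀ a : A, τ₁ a 1 = 1 ∧ τ₁ 1 a = 1)
    (hτ₁ : ∀ a₁ a₂ a₃ : A,
      τ₁ a₂ a₃ * (τ₁ (a₁ * a₂) a₃)⁻¹ * τ₁ a₁ (a₂ * a₃) * (τ₁ a₁ a₂)⁻¹ = 1)
    (hτ₂norm : ∀ b : B, τ₂ b 1 = 1 ∧ τ₂ 1 b = 1)
    (hτ₂ : ∀ b₁ b₂ b₃ : B,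
      τ₂ b₂ b₃ * (τ₂ (b₁ * b₂) b₃)⁻¹ * τ₂ b₁ (b₂ * b₃) * (τ₂ b₁ b₂)⁻¹ = 1)
    (hρnorm : (∀ a : A, ρ a 1 = 1) ∧ (∀ b : B, ρ 1 b = 1)) (hχnorm : χ 1 = 1)
    (hcond1 : ∀ (a : A) (b₁ b₂ : B), ρ a (b₁ * b₂) = ρ (β b₂ a) b₁ * ρ a b₂)
    (hcond2 : ∀ (a₁ a₂ : A) (b : B),
      ρ (a₁ * a₂) b * (ρ a₁ b)⁻¹ * (ρ a₂ b)⁻¹ * τ₁ a₁ a₂ * (τ₁ (β b a₁) (β b a₂))⁻¹ = 1)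
    (hcond3 : ∀ a₁ a₂ : A,
      ρ a₂ (T a₁) * τ₁ a₁ (β (T a₁) a₂) =
        τ₂ (T a₁) (T a₂) * (χ a₂ * (χ (a₁ * β (T a₁) a₂))⁻¹ * χ a₁)) :
    ∃ (θ₁ : A → ℂˣ) (θ₂ : B → ℂˣ),
      (∀ a₁ a₂ : A,
        τ₁ a₁ a₂ ^ (Fintype.card A * Fintype.card B) = θ₁ a₂ * (θ₁ (a₁ * a₂))⁻¹ * θ₁ a₁) ∧
      (∀ b₁ b₂ : B,
        τ₂ b₁ b₂ ^ (Fintype.card A * Fintype.card B) = θ₂ b₂ * (θ₂ (b₁ * b₂))⁻¹ * θ₂ b₁) ∧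
      (∀ (a : A) (b : B),
        ρ a b ^ (Fintype.card A * Fintype.card B) = θ₁ a * (θ₁ (β b a))⁻¹) ∧
      (∀ a : A,
        χ a ^ (Fintype.card A * Fintype.card B) = θ₁ a * (θ₂ (T a))⁻¹) := by
  classical
  -- abbreviations (kept as explicit products throughout)
  -- F a  := ∏ x, τ₁ a x
  -- Gh b := ∏ y, τ₂ y b
  -- Hc b := ∏ x, τ₂ b (T x)
  -- Rc b := ∏ x, ρ x b
  -- L1 : coboundary of F equals τ₁ ^ |A|
  have L1 : ∀ a₁ a₂ : A,
      (∏ x, τ₁ a₂ x) * (∏ x, τ₁ (a₁ * a₂) x)⁻¹ * (∏ x, τ₁ a₁ x)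
        = τ₁ a₁ a₂ ^ Fintype.card A := by
    intro a₁ a₂
    have key : ∀ x : A, τ₁ a₂ x * τ₁ a₁ (a₂ * x) = τ₁ (a₁ * a₂) x * τ₁ a₁ a₂ :=
      fun x => SchurRRBAux.rearr1 (hτ₁ a₁ a₂ x)
    have P : (∏ x, τ₁ a₂ x) * (∏ x, τ₁ a₁ (a₂ * x))
        = (∏ x, τ₁ (a₁ * a₂) x) * (∏ _x : A, τ₁ a₁ a₂) := by
      rw [← Finset.prod_mul_distrib, ← Finset.prod_mul_distrib]
      exact Finset.prod_congr rfl fun x _ => key x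
    have r : (∏ x, τ₁ a₁ (a₂ * x)) = ∏ x, τ₁ a₁ x :=
      Fintype.prod_equiv (Equiv.mulLeft a₂) (fun x => τ₁ a₁ (a₂ * x))
        (fun x => τ₁ a₁ x) (fun x => by simp)
    rw [r, Finset.prod_const, Finset.card_univ] at P
    exact SchurRRBAux.rearr3 P
  -- L2 : coboundary of Gh equals τ₂ ^ |B|
  have L2 : ∀ b₁ b₂ : B,
      (∏ y, τ₂ y b₂) * (∏ y, τ₂ y (b₁ * b₂))⁻¹ * (∏ y, τ₂ y b₁)
        = τ₂ b₁ b₂ ^ Fintype.card B := by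
    intro b₁ b₂
    have key : ∀ y : B, τ₂ b₁ b₂ * τ₂ y (b₁ * b₂) = τ₂ (y * b₁) b₂ * τ₂ y b₁ :=
      fun y => SchurRRBAux.rearr1 (hτ₂ y b₁ b₂)
    have P : (∏ _y : B, τ₂ b₁ b₂) * (∏ y, τ₂ y (b₁ * b₂))
        = (∏ y, τ₂ (y * b₁) b₂) * (∏ y, τ₂ y b₁) := by
      rw [← Finset.prod_mul_distrib, ← Finset.prod_mul_distrib]
      exact Finset.prod_congr rfl fun y _ => key y
    have r : (∏ y, τ₂ (y * b₁) b₂) = ∏ y, τ₂ y b₂ :=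
      Fintype.prod_equiv (Equiv.mulRight b₁) (fun y => τ₂ (y * b₁) b₂)
        (fun y => τ₂ y b₂) (fun y => by simp)
    rw [r, Finset.prod_const, Finset.card_univ] at P
    have P' : (∏ y, τ₂ y b₂) * (∏ y, τ₂ y b₁)
        = (∏ y, τ₂ y (b₁ * b₂)) * τ₂ b₁ b₂ ^ Fintype.card B := by
      rw [← P]; exact mul_comm _ _
    exact SchurRRBAux.rearr3 P'
  -- L3 : Rc is a homomorphism
  have L3 : ∀ b₁ b₂ : B, (∏ x, ρ x (b₁ * b₂)) = (∏ x, ρ x b₁) * (∏ x, ρ x b₂) := by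
    intro b₁ b₂
    have P : (∏ x, ρ x (b₁ * b₂)) = (∏ x, ρ (β b₂ x) b₁) * (∏ x, ρ x b₂) := by
      rw [← Finset.prod_mul_distrib]
      exact Finset.prod_congr rfl fun x _ => hcond1 x b₁ b₂
    have r : (∏ x, ρ (β b₂ x) b₁) = ∏ x, ρ x b₁ :=
      Fintype.prod_equiv (β b₂).toEquiv (fun x => ρ (β b₂ x) b₁)
        (fun x => ρ x b₁) (fun x => by simp)
    rwa [r] at P
  -- L4 : F (β b a) = F a * (ρ a b ^ |A|)⁻¹
  have L4 : ∀ (a : A) (b : B),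
      (∏ x, τ₁ (β b a) x) = (∏ x, τ₁ a x) * (ρ a b ^ Fintype.card A)⁻¹ := by
    intro a₁ b
    have key : ∀ a₂ : A, ρ (a₁ * a₂) b * τ₁ a₁ a₂
        = ρ a₁ b * (ρ a₂ b * τ₁ (β b a₁) (β b a₂)) :=
      fun a₂ => SchurRRBAux.rearr2 (hcond2 a₁ a₂ b)
    have P : (∏ x, ρ (a₁ * x) b) * (∏ x, τ₁ a₁ x)
        = (∏ _x : A, ρ a₁ b) * ((∏ x, ρ x b) * (∏ x, τ₁ (β b a₁) (β b x))) := by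
      rw [← Finset.prod_mul_distrib, ← Finset.prod_mul_distrib,
        ← Finset.prod_mul_distrib]
      exact Finset.prod_congr rfl fun x _ => key x
    have r1 : (∏ x, ρ (a₁ * x) b) = ∏ x, ρ x b :=
      Fintype.prod_equiv (Equiv.mulLeft a₁) (fun x => ρ (a₁ * x) b)
        (fun x => ρ x b) (fun x => by simp)
    have r2 : (∏ x, τ₁ (β b a₁) (β b x)) = ∏ x, τ₁ (β b a₁) x :=
      Fintype.prod_equiv (β b).toEquiv (fun x => τ₁ (β b a₁) (β b x))
        (fun x => τ₁ (β b a₁) x) (fun x => by simp)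
    rw [r1, r2, Finset.prod_const, Finset.card_univ, mul_left_comm] at P
    have h := mul_left_cancel P
    rw [h, mul_comm (ρ a₁ b ^ Fintype.card A), mul_inv_cancel_right]
  -- L5 : Rc (T a) * F a = Hc (T a) * χ a ^ |A|
  have L5 : ∀ a : A,
      (∏ x, ρ x (T a)) * (∏ x, τ₁ a x)
        = (∏ x, τ₂ (T a) (T x)) * χ a ^ Fintype.card A := by
    intro a₁
    have P : (∏ x, ρ x (T a₁) * τ₁ a₁ (β (T a₁) x))
        = ∏ x, τ₂ (T a₁) (T x) * (χ x * (χ (a₁ * β (T a₁) x))⁻¹ * χ a₁) :=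
      Finset.prod_congr rfl fun x _ => hcond3 a₁ x
    simp only [Finset.prod_mul_distrib, Finset.prod_inv_distrib,
      Finset.prod_const, Finset.card_univ] at P
    have r1 : (∏ x, τ₁ a₁ (β (T a₁) x)) = ∏ x, τ₁ a₁ x :=
      Fintype.prod_equiv (β (T a₁)).toEquiv (fun x => τ₁ a₁ (β (T a₁) x))
        (fun x => τ₁ a₁ x) (fun x => by simp)
    have r2 : (∏ x, χ (a₁ * β (T a₁) x)) = ∏ x, χ x :=
      Fintype.prod_equiv ((β (T a₁)).toEquiv.trans (Equiv.mulLeft a₁))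
        (fun x => χ (a₁ * β (T a₁) x)) (fun x => χ x) (fun x => by simp)
    rw [r1, r2, mul_inv_cancel, one_mul] at P
    exact P
  -- L6 : Hc (T a₀) * Hc y = Hc (y * T a₀) * τ₂ y (T a₀) ^ |A|
  have L6 : ∀ (y : B) (a₀ : A),
      (∏ x, τ₂ (T a₀) (T x)) * (∏ x, τ₂ y (T x))
        = (∏ x, τ₂ (y * T a₀) (T x)) * τ₂ y (T a₀) ^ Fintype.card A := by
    intro y a₀
    have key : ∀ x : A, τ₂ (T a₀) (T x) * τ₂ y (T (a₀ * β (T a₀) x))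
        = τ₂ (y * T a₀) (T x) * τ₂ y (T a₀) := by
      intro x
      have h := SchurRRBAux.rearr1 (hτ₂ y (T a₀) (T x))
      rwa [hT a₀ x] at h
    have P : (∏ x, τ₂ (T a₀) (T x)) * (∏ x, τ₂ y (T (a₀ * β (T a₀) x)))
        = (∏ x, τ₂ (y * T a₀) (T x)) * (∏ _x : A, τ₂ y (T a₀)) := by
      rw [← Finset.prod_mul_distrib, ← Finset.prod_mul_distrib]
      exact Finset.prod_congr rfl fun x _ => key x
    have r : (∏ x, τ₂ y (T (a₀ * β (T a₀) x))) = ∏ x, τ₂ y (T x) :=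
      Fintype.prod_equiv ((β (T a₀)).toEquiv.trans (Equiv.mulLeft a₀))
        (fun x => τ₂ y (T (a₀ * β (T a₀) x))) (fun x => τ₂ y (T x))
        (fun x => by simp)
    rw [r, Finset.prod_const, Finset.card_univ] at P
    exact P
  -- L7 : Hc (T a₀) ^ |B| = Gh (T a₀) ^ |A|
  have L7 : ∀ a₀ : A,
      (∏ x, τ₂ (T a₀) (T x)) ^ Fintype.card B
        = (∏ y, τ₂ y (T a₀)) ^ Fintype.card A := by
    intro a₀
    have P : (∏ y : B, (∏ x, τ₂ (T a₀) (T x)) * (∏ x, τ₂ y (T x)))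
        = ∏ y : B, (∏ x, τ₂ (y * T a₀) (T x)) * τ₂ y (T a₀) ^ Fintype.card A :=
      Finset.prod_congr rfl fun y _ => L6 y a₀
    simp only [Finset.prod_mul_distrib, Finset.prod_pow,
      Finset.prod_const, Finset.card_univ] at P
    have r : (∏ y : B, ∏ x, τ₂ (y * T a₀) (T x)) = ∏ y : B, ∏ x, τ₂ y (T x) :=
      Fintype.prod_equiv (Equiv.mulRight (T a₀))
        (fun y => ∏ x, τ₂ (y * T a₀) (T x)) (fun y => ∏ x, τ₂ y (T x))
        (fun y => by simp)
    rw [r, mul_comm ((∏ x, τ₂ (T a₀) (T x)) ^ Fintype.card B)] at P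
    exact mul_left_cancel P
  -- the explicit coboundaries
  refine ⟨fun a => (∏ x, τ₁ a x) ^ Fintype.card B,
    fun b => (∏ y, τ₂ y b) ^ Fintype.card A * ((∏ x, ρ x b) ^ Fintype.card B)⁻¹,
    ?_, ?_, ?_, ?_⟩
  · -- goal 1 : τ₁ part
    intro a₁ a₂
    rw [pow_mul]
    exact (SchurRRBAux.powCob (Fintype.card B) (L1 a₁ a₂)).symm
  · -- goal 2 : τ₂ part
    intro b₁ b₂
    dsimp only
    have c1 : (∏ y, τ₂ y b₂) ^ Fintype.card A
          * ((∏ y, τ₂ y (b₁ * b₂)) ^ Fintype.card A)⁻¹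
          * (∏ y, τ₂ y b₁) ^ Fintype.card A
        = (τ₂ b₁ b₂ ^ Fintype.card B) ^ Fintype.card A :=
      SchurRRBAux.powCob (Fintype.card A) (L2 b₁ b₂)
    have c2 : (∏ x, ρ x (b₁ * b₂)) ^ Fintype.card B
        = (∏ x, ρ x b₁) ^ Fintype.card B * (∏ x, ρ x b₂) ^ Fintype.card B := by
      rw [L3 b₁ b₂, mul_pow]
    rw [mul_comm (Fintype.card A) (Fintype.card B), pow_mul, ← c1, c2]
    simp [mul_inv, inv_inv, mul_comm, mul_left_comm, mul_assoc]
  · -- goal 3 : ρ part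
    intro a b
    dsimp only
    rw [L4 a b, mul_pow, inv_pow, mul_inv, inv_inv,
      mul_inv_cancel_left, ← pow_mul]
  · -- goal 4 : χ part
    intro a
    dsimp only
    have e : (∏ x, τ₁ a x) ^ Fintype.card B * (∏ x, ρ x (T a)) ^ Fintype.card B
        = (∏ x, τ₂ (T a) (T x)) ^ Fintype.card B
          * (χ a ^ Fintype.card A) ^ Fintype.card B := by
      rw [← mul_pow, ← mul_pow, mul_comm ((∏ x, τ₁ a x)), L5 a]
    have e3 := SchurRRBAux.rearr3 e
    rw [← L7 a, mul_inv, inv_inv, ← mul_assoc, e3, ← pow_mul, mul_comm (Fintype.card A)]
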